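/- Let R be block diagonal symmetric positive definite and S symmetric positive definite (both r×r), Π_i a block selector matrix, Î_i := I − Π_iΠ_i^T, Z := (R+S)^{-1}, and Z_i := Π_i (Π_i^T (R+S) Π_i)^{-1} Π_i^T. Then Z^{-1} Z_i Z^{-1} − Î_i S Z_i Z^{-1} − Z^{-1} Z_i S Î_i + Î_i S Z_i S Î_i = Π_iΠ_i^T (R+S) Π_iΠ_i^T. -/

import Mathlib

open Matrix

/-- Abstract algebraic core. -/
lemma aux_stmt9 {r : ℕ} (A Zi P S R Ihat : Matrix (Fin r) (Fin r) ℝ)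
    (hA : A = R + S) (hI : Ihat = 1 - P)
    (h1 : P * (A * Zi) = P) (h2 : Zi * (A * P) = P)
    (h3 : Ihat * (R * Zi) = 0) (h4 : Zi * (R * Ihat) = 0) :
    A * Zi * A - Ihat * S * Zi * A - A * Zi * S * Ihat + Ihat * S * Zi * S * Ihat
      = P * A * P := by
  have hS' : S = A - R := by rw [hA]; abel
  have k1 : Ihat * (S * Zi) = Ihat * (A * Zi) := by
    rw [hS', sub_mul, mul_sub, h3, sub_zero]
  have k1' : Ihat * (S * Zi) = A * Zi - P := by
    rw [k1, hI, sub_mul, one_mul, h1]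
  have k2 : Zi * (S * Ihat) = Zi * (A * Ihat) := by
    rw [hS', sub_mul, mul_sub, h4, sub_zero]
  have k2' : Zi * (S * Ihat) = Zi * A - P := by
    rw [k2, hI, mul_sub, mul_one, mul_sub, h2]
  have E1 : Ihat * S * Zi * A = A * Zi * A - P * A := by
    calc Ihat * S * Zi * A = (Ihat * (S * Zi)) * A := by noncomm_ring
      _ = (A * Zi - P) * A := by rw [k1']
      _ = A * Zi * A - P * A := by noncomm_ring
  have E2 : A * Zi * S * Ihat = A * Zi * A - A * P := by
    calc A * Zi * S * Ihat = A * (Zi * (S * Ihat)) := by noncomm_ring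
      _ = A * (Zi * A - P) := by rw [k2']
      _ = A * Zi * A - A * P := by noncomm_ring
  have E3 : Ihat * S * Zi * S * Ihat = A * Zi * A - P * A - A * P + P * A * P := by
    calc Ihat * S * Zi * S * Ihat = (Ihat * (S * Zi)) * (S * Ihat) := by noncomm_ring
      _ = (Ihat * (A * Zi)) * (S * Ihat) := by rw [k1]
      _ = Ihat * (A * (Zi * (S * Ihat))) := by noncomm_ring
      _ = Ihat * (A * (Zi * A - P)) := by rw [k2']
      _ = (1 - P) * (A * (Zi * A - P)) := by rw [hI]
      _ = A * Zi * A - A * P - (P * (A * Zi)) * A + P * (A * P) := by noncomm_ring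
      _ = A * Zi * A - P * A - A * P + P * A * P := by rw [h1]; noncomm_ring
  rw [E1, E2, E3]
  abel

theorem stmt9 {n r : ℕ} {d : Fin n → ℕ}
    (Sel : ∀ i : Fin n, Matrix (Fin r) (Fin (d i)) ℝ)
    (hortho : ∀ i, (Sel i)ᵀ * Sel i = 1)
    (hsum : ∑ i, Sel i * (Sel i)ᵀ = 1)
    (R S : Matrix (Fin r) (Fin r) ℝ) (hR : R.PosDef)
    (hblk : ∀ j k, j ≠ k → (Sel j)ᵀ * R * Sel k = 0)
    (hS : S.PosDef)
    (i : Fin n)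
    (Ihat : Matrix (Fin r) (Fin r) ℝ) (hIhat : Ihat = 1 - Sel i * (Sel i)ᵀ)
    (Z : Matrix (Fin r) (Fin r) ℝ) (hZ : Z = (R + S)⁻¹)
    (Zi : Matrix (Fin r) (Fin r) ℝ)
    (hZi : Zi = Sel i * ((Sel i)ᵀ * (R + S) * Sel i)⁻¹ * (Sel i)ᵀ) :
    Z⁻¹ * Zi * Z⁻¹ - Ihat * S * Zi * Z⁻¹ - Z⁻¹ * Zi * S * Ihat + Ihat * S * Zi * S * Ihat
      = Sel i * (Sel i)ᵀ * (R + S) * (Sel i * (Sel i)ᵀ) := by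
  set A := R + S with hA
  set P := Sel i * (Sel i)ᵀ with hP
  set B := (Sel i)ᵀ * A * Sel i with hB
  -- positivity facts
  have hApd : A.PosDef := hR.add hS
  have hAdet : IsUnit A.det := isUnit_iff_ne_zero.mpr hApd.det_pos.ne'
  -- B is positive definite
  have hBpd : B.PosDef := by
    refine PosDef.of_dotProduct_mulVec_pos ?_ ?_
    · have := isHermitian_conjTranspose_mul_mul (Sel i) hApd.1
      rwa [conjTranspose_eq_transpose_of_trivial] at this
    · intro x hx
      have hxv : Sel i *ᵥ x ≠ 0 := by
        intro h
        apply hx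
        have h0 : (Sel i)ᵀ *ᵥ (Sel i *ᵥ x) = x := by
          rw [mulVec_mulVec, hortho i, one_mulVec]
        rw [h, mulVec_zero] at h0
        exact h0.symm
      have := hApd.dotProduct_mulVec_pos hxv
      simpa only [hB, star_mulVec, dotProduct_mulVec, vecMul_vecMul,
        conjTranspose_eq_transpose_of_trivial] using this
  have hBdet : IsUnit B.det := isUnit_iff_ne_zero.mpr hBpd.det_pos.ne'
  have hBinv : B * B⁻¹ = 1 := mul_nonsing_inv _ hBdet
  have hBinv' : B⁻¹ * B = 1 := nonsing_inv_mul _ hBdet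
  -- Z⁻¹ = A
  have hZinv : Z⁻¹ = A := by rw [hZ, nonsing_inv_nonsing_inv _ hAdet]
  -- key identities
  have h1 : P * (A * Zi) = P := by
    rw [hZi, hP]
    calc Sel i * (Sel i)ᵀ * (A * (Sel i * B⁻¹ * (Sel i)ᵀ))
        = Sel i * (((Sel i)ᵀ * A * Sel i) * B⁻¹) * (Sel i)ᵀ := by
          simp only [Matrix.mul_assoc]
      _ = Sel i * (Sel i)ᵀ := by rw [← hB, hBinv, Matrix.mul_one]
  have h2 : Zi * (A * P) = P := by
    rw [hZi, hP]
    calc Sel i * B⁻¹ * (Sel i)ᵀ * (A * (Sel i * (Sel i)ᵀ))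
        = Sel i * (B⁻¹ * ((Sel i)ᵀ * A * Sel i)) * (Sel i)ᵀ := by
          simp only [Matrix.mul_assoc]
      _ = Sel i * (Sel i)ᵀ := by rw [← hB, hBinv', Matrix.mul_one]
  -- block-diagonality of R
  have hsum' : (∑ j, Sel j * (Sel j)ᵀ) * (R * Sel i) = Sel i * ((Sel i)ᵀ * (R * Sel i)) := by
    rw [Matrix.sum_mul, Finset.sum_eq_single i]
    · rw [Matrix.mul_assoc]
    · intro j _ hj
      rw [Matrix.mul_assoc (Sel j) ((Sel j)ᵀ) (R * Sel i),
        ← Matrix.mul_assoc ((Sel j)ᵀ) R (Sel i), hblk j i hj, Matrix.mul_zero]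
    · intro h; exact absurd (Finset.mem_univ i) h
  have hRSel : R * Sel i = Sel i * ((Sel i)ᵀ * (R * Sel i)) := by
    calc R * Sel i = 1 * (R * Sel i) := (Matrix.one_mul _).symm
      _ = (∑ j, Sel j * (Sel j)ᵀ) * (R * Sel i) := by rw [hsum]
      _ = Sel i * ((Sel i)ᵀ * (R * Sel i)) := hsum'
  have hIS : Ihat * Sel i = 0 := by
    rw [hIhat, Matrix.sub_mul, Matrix.one_mul, hP, Matrix.mul_assoc, hortho,
      Matrix.mul_one, sub_self]
  have hSI : (Sel i)ᵀ * Ihat = 0 := by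
    rw [hIhat, Matrix.mul_sub, Matrix.mul_one, hP, ← Matrix.mul_assoc, hortho,
      Matrix.one_mul, sub_self]
  have hIRS : Ihat * (R * Sel i) = 0 := by
    rw [hRSel, ← Matrix.mul_assoc, hIS, Matrix.zero_mul]
  have h3 : Ihat * (R * Zi) = 0 := by
    rw [hZi]
    calc Ihat * (R * (Sel i * B⁻¹ * (Sel i)ᵀ))
        = (Ihat * (R * Sel i)) * (B⁻¹ * (Sel i)ᵀ) := by simp only [Matrix.mul_assoc]
      _ = 0 := by rw [hIRS, Matrix.zero_mul]
  -- symmetry of R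
  have hRsym : Rᵀ = R := by
    have h : Rᴴ = R := hR.1
    rwa [conjTranspose_eq_transpose_of_trivial] at h
  have hSelR : (Sel i)ᵀ * R = ((Sel i)ᵀ * (R * Sel i))ᵀ * (Sel i)ᵀ := by
    have := congrArg Matrix.transpose hRSel
    rw [Matrix.transpose_mul, hRsym] at this
    rw [this, Matrix.transpose_mul]
  have hSRI : (Sel i)ᵀ * (R * Ihat) = 0 := by
    rw [← Matrix.mul_assoc, hSelR, Matrix.mul_assoc, hSI, Matrix.mul_zero]
  have h4 : Zi * (R * Ihat) = 0 := by
    rw [hZi]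
    calc Sel i * B⁻¹ * (Sel i)ᵀ * (R * Ihat)
        = (Sel i * B⁻¹) * ((Sel i)ᵀ * (R * Ihat)) := by simp only [Matrix.mul_assoc]
      _ = 0 := by rw [hSRI, Matrix.mul_zero]
  have main := aux_stmt9 A Zi P S R Ihat hA hIhat h1 h2 h3 h4
  rw [hZinv]
  calc A * Zi * A - Ihat * S * Zi * A - A * Zi * S * Ihat + Ihat * S * Zi * S * Ihat
      = P * A * P := main
    _ = Sel i * (Sel i)ᵀ * A * (Sel i * (Sel i)ᵀ) := by rw [hP]
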